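/- For the k-price auction with 2 ≤ k ≤ n, an agent i, and a price p with v_i > v_{n−(k−3)} and v_{n−(k−3)} ≤ p ≤ v_i (with v_{n+1} := 0), the bid profile in which agent i bids v_1, the k−2 lowest-valuation agents other than i bid v_1, and every other agent bids p, is a pure-strategy Nash equilibrium in which agent i wins and pays p. -/

import Mathlib

open Classical

/-- The k-th highest bid (k counted from 1). -/
noncomputable def kthHighest {n : ℕ} (b : Fin n → ℝ) (k : ℕ) : ℝ :=
  ((List.ofFn b).mergeSort (fun x y => decide (y ≤ x))).getD (k - 1) 0

/-- Agent `i` wins: her bid is highest, with ties broken toward the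
agent with the highest valuation, i.e. (for strictly decreasing valuations)
the lowest index among the maximal bidders. -/
def wins {n : ℕ} (b : Fin n → ℝ) (i : Fin n) : Prop :=
  (∀ j, b j ≤ b i) ∧ ∀ j, b j = b i → i ≤ j

/-- The price paid by the winner in the k-price auction (2 ≤ k ≤ n), or in the
first-price auction (the case k = n+1), where the winner pays the highest bid. -/
noncomputable def price {n : ℕ} (k : ℕ) (b : Fin n → ℝ) : ℝ :=
  if k = n + 1 then kthHighest b 1 else kthHighest b k

/-- The winner gets her valuation minus the price; losers get 0. -/
noncomputable def utility {n : ℕ} (v : Fin n → ℝ) (k : ℕ) (b : Fin n → ℝ)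
    (i : Fin n) : ℝ :=
  if wins b i then v i - price k b else 0

/-- Pure-strategy Nash equilibrium with nonnegative bids: no agent can strictly
improve her utility by a unilateral deviation to another nonnegative bid. -/
def NashEq {n : ℕ} (v : Fin n → ℝ) (k : ℕ) (b : Fin n → ℝ) : Prop :=
  (∀ i, 0 ≤ b i) ∧
  ∀ i : Fin n, ∀ b' : ℝ, 0 ≤ b' →
    utility v k (Function.update b i b') i ≤ utility v k b i

/-- One-based valuation indexing, with the convention `v_{n+1} = 0`. -/
noncomputable def vIdx {n : ℕ} (v : Fin n → ℝ) (j : ℕ) : ℝ :=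
  if h : 1 ≤ j ∧ j ≤ n then v ⟨j - 1, by omega⟩ else 0

section lemmas

lemma card_val_le {n m : ℕ} (h : m ≤ n) :
    ((Finset.univ : Finset (Fin n)).filter (fun j => m ≤ j.val)).card = n - m := by
  have himg : (((Finset.univ : Finset (Fin n)).filter (fun j => m ≤ j.val)).image Fin.val)
      = Finset.Ico m n := by
    ext x
    simp only [Finset.mem_image, Finset.mem_filter, Finset.mem_univ, true_and, Finset.mem_Ico]
    constructor
    · rintro ⟨j, hj, rfl⟩; exact ⟨hj, j.isLt⟩
    · rintro ⟨h1, h2⟩; exact ⟨⟨x, h2⟩, h1, rfl⟩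
  have := Finset.card_image_of_injective
    (((Finset.univ : Finset (Fin n)).filter (fun j => m ≤ j.val))) (Fin.val_injective)
  rw [himg, Nat.card_Ico] at this
  omega

lemma countP_ofFn {n : ℕ} (b : Fin n → ℝ) (q : ℝ → Prop) [DecidablePred q] :
    (List.ofFn b).countP (fun x => decide (q x)) = (Finset.univ.filter (fun j => q (b j))).card := by
  rw [List.ofFn_eq_map, List.countP_map]
  rw [Finset.card_def, Finset.filter_val, Fin.univ_def]
  simp [Multiset.filter_coe, List.countP_eq_length_filter]
  rfl

lemma msort_sorted {n : ℕ} (b : Fin n → ℝ) :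
    List.Pairwise (fun x y : ℝ => y ≤ x) ((List.ofFn b).mergeSort (fun x y => decide (y ≤ x))) := by
  have := List.pairwise_mergeSort (le := fun x y : ℝ => decide (y ≤ x))
    (fun a b c hab hbc => by simp_all; linarith)
    (fun a b => by simpa using le_total b a) (List.ofFn b)
  simpa using this

lemma kth_ge {n : ℕ} (b : Fin n → ℝ) (k : ℕ) (hk : 1 ≤ k) (t : ℝ)
    (h : k ≤ (Finset.univ.filter (fun j => t ≤ b j)).card) :
    t ≤ kthHighest b k := by
  set l := (List.ofFn b).mergeSort (fun x y => decide (y ≤ x)) with hl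
  have hperm : l.Perm (List.ofFn b) := List.mergeSort_perm _ _
  have hsort : List.Pairwise (fun x y : ℝ => y ≤ x) l := msort_sorted b
  have hlen : l.length = n := by rw [hperm.length_eq, List.length_ofFn]
  have hcount : k ≤ l.countP (fun x => decide (t ≤ x)) := by
    rw [hperm.countP_eq, countP_ofFn]; exact h
  by_contra hlt
  push_neg at hlt
  have hdef : kthHighest b k = l.getD (k-1) 0 := rfl
  rw [hdef] at hlt
  have hkn : k - 1 < l.length := by
    by_contra hge
    push_neg at hge
    have : l.countP (fun x => decide (t ≤ x)) ≤ l.length := List.countP_le_length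
    omega
  have hget : l.getD (k-1) 0 = l[k-1] := List.getD_eq_getElem l 0 hkn
  rw [hget] at hlt
  have hdrop : ∀ x ∈ l.drop (k-1), x < t := by
    intro x hx
    rw [List.drop_eq_getElem_cons hkn] at hx
    rcases List.mem_cons.mp hx with rfl | hx
    · exact hlt
    · have hs : List.Pairwise (fun x y : ℝ => y ≤ x) (l[k-1] :: l.drop ((k-1)+1)) := by
        rw [← List.drop_eq_getElem_cons hkn]
        exact hsort.drop
      calc x ≤ l[k-1] := List.rel_of_pairwise_cons hs hx
        _ < t := hlt
  have hc0 : (l.drop (k-1)).countP (fun x => decide (t ≤ x)) = 0 := by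
    rw [List.countP_eq_zero]
    intro x hx
    simpa using not_le.mpr (hdrop x hx)
  have : l.countP (fun x => decide (t ≤ x)) ≤ k - 1 := by
    conv_lhs => rw [← List.take_append_drop (k-1) l]
    rw [List.countP_append, hc0]
    have := List.countP_le_length (l := l.take (k-1)) (p := fun x => decide (t ≤ x))
    simp at this
    omega
  omega

lemma kth_le {n : ℕ} (b : Fin n → ℝ) (k : ℕ) (hk1 : 1 ≤ k) (hkn : k ≤ n) (t : ℝ)
    (h : (Finset.univ.filter (fun j => t < b j)).card < k) :
    kthHighest b k ≤ t := by
  set l := (List.ofFn b).mergeSort (fun x y => decide (y ≤ x)) with hl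
  have hperm : l.Perm (List.ofFn b) := List.mergeSort_perm _ _
  have hsort : List.Pairwise (fun x y : ℝ => y ≤ x) l := msort_sorted b
  have hlen : l.length = n := by rw [hperm.length_eq, List.length_ofFn]
  have hcount : l.countP (fun x => decide (t < x)) < k := by
    rw [hperm.countP_eq, countP_ofFn]; exact h
  by_contra hlt
  push_neg at hlt
  have hkl : k - 1 < l.length := by omega
  have hdef : kthHighest b k = l.getD (k-1) 0 := rfl
  rw [hdef, List.getD_eq_getElem l 0 hkl] at hlt
  have htake : ∀ x ∈ l.take k, t < x := by
    intro x hx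
    obtain ⟨j, hj, hje⟩ := List.mem_take_iff_getElem.mp hx
    have hjk : j < k := lt_min_iff.mp hj |>.1
    have hjl : j < l.length := lt_min_iff.mp hj |>.2
    have hle : l[k-1] ≤ l[j] := by
      rcases Nat.lt_or_ge j (k-1) with h2 | h2
      · exact List.pairwise_iff_getElem.mp hsort j (k-1) hjl hkl h2
      · have : j = k-1 := by omega
        subst this; exact le_refl _
    rw [← hje]
    exact lt_of_lt_of_le hlt hle
  have : k ≤ l.countP (fun x => decide (t < x)) := by
    conv_rhs => rw [← List.take_append_drop k l]
    rw [List.countP_append]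
    have h2 : (l.take k).countP (fun x => decide (t < x)) = (l.take k).length := by
      apply List.countP_eq_length.mpr
      intro x hx; simpa using htake x hx
    rw [h2, List.length_take]
    omega
  omega

end lemmas

theorem stmt9 {n : ℕ} (hn : 2 ≤ n) (v : Fin n → ℝ) (hv : StrictAnti v) (hvpos : ∀ i, 0 < v i) (k : ℕ) (hk2 : 2 ≤ k) (hkn : k ≤ n)
    (i : Fin n) (p : ℝ) (hvi : vIdx v (n + 3 - k) < v i)
    (hp1 : vIdx v (n + 3 - k) ≤ p) (hp2 : p ≤ v i)
    (b : Fin n → ℝ)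
    (hbdef : ∀ j : Fin n,
      b j = if j = i ∨ n + 2 - k ≤ j.val then v ⟨0, by omega⟩ else p) :
    NashEq v k b ∧ wins b i ∧ price k b = p := by
  set v1 : ℝ := v ⟨0, by omega⟩ with hv1def
  have hv1 : ∀ j, v j ≤ v1 := fun j => hv.antitone (by simp [Fin.le_def])
  have hpv1 : p ≤ v1 := le_trans hp2 (hv1 i)
  have hvIdx0 : 0 ≤ vIdx v (n + 3 - k) := by
    unfold vIdx; split
    · exact le_of_lt (hvpos _)
    · exact le_refl 0
  have hp0 : 0 ≤ p := le_trans hvIdx0 hp1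
  have hi : i.val < n + 2 - k := by
    rcases Nat.lt_or_ge k 3 with h3 | h3
    · have := i.isLt; omega
    · have hidx : vIdx v (n + 3 - k) = v ⟨n + 2 - k, by omega⟩ := by
        unfold vIdx
        rw [dif_pos (by omega)]
        congr 1
        ext
        simp
        omega
      rw [hidx] at hvi
      have : i < (⟨n + 2 - k, by omega⟩ : Fin n) := hv.lt_iff_gt.mp hvi
      exact this
  have hb_i : b i = v1 := by rw [hbdef i, if_pos (Or.inl rfl)]
  have hb_tail : ∀ j : Fin n, n + 2 - k ≤ j.val → b j = v1 := fun j hj => by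
    rw [hbdef j, if_pos (Or.inr hj)]
  have hble : ∀ j, b j ≤ v1 := by
    intro j; rw [hbdef j]; split
    · exact le_refl _
    · exact hpv1
  have hbge : ∀ j, p ≤ b j := by
    intro j; rw [hbdef j]; split
    · exact hpv1
    · exact le_refl _
  -- wins b i
  have hwins : wins b i := by
    constructor
    · intro j; rw [hb_i]; exact hble j
    · intro j hj
      by_cases hje : j = i
      · exact le_of_eq hje.symm
      · by_cases htl : n + 2 - k ≤ j.val
        · rw [Fin.le_def]; omega
        · rw [hbdef j, if_neg (by tauto), hb_i] at hj
          have hvip : v i = v1 := le_antisymm (hv1 i) (hj ▸ hp2)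
          have : i = ⟨0, by omega⟩ := hv.injective hvip
          rw [Fin.le_def, this]
          exact Nat.zero_le _
  -- price
  have hkne : ¬ (k = n + 1) := by omega
  have hTcard : ((Finset.univ : Finset (Fin n)).filter (fun j => n + 2 - k ≤ j.val)).card = k - 2 := by
    rw [card_val_le (by omega)]; omega
  have hprice : price k b = p := by
    rw [price, if_neg hkne]
    apply le_antisymm
    · apply kth_le b k (by omega) hkn
      have hsub : (Finset.univ.filter (fun j => p < b j)) ⊆
          insert i (Finset.univ.filter (fun j : Fin n => n + 2 - k ≤ j.val)) := by
        intro j hj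
        rw [Finset.mem_filter] at hj
        by_cases hje : j = i
        · simp [hje]
        · by_cases htl : n + 2 - k ≤ j.val
          · exact Finset.mem_insert.mpr (Or.inr (Finset.mem_filter.mpr ⟨Finset.mem_univ j, htl⟩))
          · rw [hbdef j, if_neg (by tauto)] at hj
            exact absurd hj.2 (lt_irrefl p)
      calc (Finset.univ.filter (fun j => p < b j)).card
          ≤ (insert i (Finset.univ.filter (fun j : Fin n => n + 2 - k ≤ j.val))).card :=
            Finset.card_le_card hsub
        _ ≤ (Finset.univ.filter (fun j : Fin n => n + 2 - k ≤ j.val)).card + 1 :=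
            Finset.card_insert_le _ _
        _ = k - 1 := by omega
        _ < k := by omega
    · apply kth_ge b k (by omega)
      have : (Finset.univ.filter (fun j => p ≤ b j)) = Finset.univ := by
        apply Finset.filter_true_of_mem
        intro j _; exact hbge j
      rw [this, Finset.card_univ, Fintype.card_fin]
      exact hkn
  have hub : utility v k b i = v i - p := by
    rw [utility, if_pos hwins, hprice]
  have hnwins : ∀ j : Fin n, j ≠ i → ¬ wins b j := by
    intro j hji hwj
    have h1 : b i ≤ b j := hwj.1 i
    have h2 : b j ≤ b i := hwins.1 j
    have heq : b j = b i := le_antisymm h2 h1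
    have := hwins.2 j heq
    have := hwj.2 i heq.symm
    exact hji (le_antisymm ‹j ≤ i› ‹i ≤ j›)
  refine ⟨⟨?_, ?_⟩, hwins, hprice⟩
  · intro j; rw [hbdef j]; split
    · exact le_of_lt (hvpos _)
    · exact hp0
  · intro j b' hb'
    set c := Function.update b j b' with hc
    by_cases hw : wins c j
    · -- j wins after deviating
      have hcj : c j = b' := Function.update_self j b' b
      have hcl : ∀ l, l ≠ j → c l = b l := fun l hl => Function.update_of_ne hl b' b
      have huc : utility v k c j = v j - price k c := by rw [utility, if_pos hw]
      have hpc : price k c = kthHighest c k := by rw [price, if_neg hkne]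
      by_cases hji : j = i
      · -- deviator is the winner i
        subst hji
        -- there is another agent
        have hpge : p ≤ b' := by
          obtain ⟨l, hl⟩ : ∃ l : Fin n, l ≠ j := by
            rcases Nat.lt_or_ge (j.val + 1) n with h2 | h2
            · exact ⟨⟨j.val + 1, h2⟩, by simp [Fin.ext_iff]⟩
            · exact ⟨⟨0, by omega⟩, by simp [Fin.ext_iff]; omega⟩
          have := hw.1 l
          rw [hcl l hl, hcj] at this
          exact le_trans (hbge l) this
        have hge : p ≤ price k c := by
          rw [hpc]
          apply kth_ge c k (by omega)
          have : (Finset.univ.filter (fun l => p ≤ c l)) = Finset.univ := by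
            apply Finset.filter_true_of_mem
            intro l _
            by_cases hl : l = j
            · rw [hl, hcj]; exact hpge
            · rw [hcl l hl]; exact hbge l
          rw [this, Finset.card_univ, Fintype.card_fin]
          exact hkn
        rw [huc, hub]
        linarith
      · -- deviator is a loser
        have hub0 : utility v k b j = 0 := by rw [utility, if_neg (hnwins j hji)]
        have hbv1 : v1 ≤ b' := by
          have := hw.1 i
          rw [hcl i (fun h => hji h.symm), hcj, hb_i] at this
          exact this
        rw [huc, hub0]
        by_cases htl : n + 2 - k ≤ j.val
        · -- tail deviator
          have hk3 : 3 ≤ k := by have := j.isLt; omega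
          have hge : p ≤ price k c := by
            rw [hpc]
            apply kth_ge c k (by omega)
            have : (Finset.univ.filter (fun l => p ≤ c l)) = Finset.univ := by
              apply Finset.filter_true_of_mem
              intro l _
              by_cases hl : l = j
              · rw [hl, hcj]; exact le_trans hpv1 hbv1
              · rw [hcl l hl]; exact hbge l
            rw [this, Finset.card_univ, Fintype.card_fin]
            exact hkn
          have hvj : v j ≤ p := by
            have hidx : vIdx v (n + 3 - k) = v ⟨n + 2 - k, by omega⟩ := by
              unfold vIdx
              rw [dif_pos (by omega)]
              congr 1
              ext
              simp
              omega
            have : v j ≤ v ⟨n + 2 - k, by omega⟩ := hv.antitone (by rw [Fin.le_def]; exact htl)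
            rw [hidx] at hp1
            linarith
          linarith
        · -- middle deviator
          have hge : v1 ≤ price k c := by
            rw [hpc]
            apply kth_ge c k (by omega)
            set T := (Finset.univ : Finset (Fin n)).filter (fun l => n + 2 - k ≤ l.val) with hT
            have hiT : i ∉ T := by simp [hT]; omega
            have hjT : j ∉ T := by simp [hT]; omega
            have hij : i ∉ insert j T := by
              simp only [Finset.mem_insert]
              push_neg
              exact ⟨fun h => hji h.symm, hiT⟩
            have hsub : insert i (insert j T) ⊆ Finset.univ.filter (fun l => v1 ≤ c l) := by
              intro l hl
              rw [Finset.mem_filter]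
              refine ⟨Finset.mem_univ l, ?_⟩
              rcases Finset.mem_insert.mp hl with rfl | hl
              · rw [hcl l (fun h => hji h.symm)]
                rw [hb_i]
              · rcases Finset.mem_insert.mp hl with rfl | hl
                · rw [hcj]; exact hbv1
                · have hlv : n + 2 - k ≤ l.val := by
                    rw [hT] at hl
                    exact (Finset.mem_filter.mp hl).2
                  have hlj : l ≠ j := by
                    intro h; rw [h] at hlv; omega
                  rw [hcl l hlj, hb_tail l hlv]
            have hcard : (insert i (insert j T)).card = k := by
              rw [Finset.card_insert_of_notMem hij, Finset.card_insert_of_notMem hjT, hTcard]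
              omega
            calc k = (insert i (insert j T)).card := hcard.symm
              _ ≤ _ := Finset.card_le_card hsub
          have := hv1 j
          linarith
    · -- j does not win after deviating
      rw [utility, if_neg hw]
      by_cases hji : j = i
      · subst hji; rw [hub]; linarith
      · rw [utility, if_neg (hnwins j hji)]
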